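/- Fix an integer n ≥ 3 and a real l satisfying the admissibility condition 2·sin(π/(2n)) < l < 2·sin(π/n), and set x_max := √(1 − l²/(4·sin²(π/n))). Then there exists x with 0 < x < x_max such that x = √(1−x²)·sin(n·arcsin(l/(2·√(1−x²)))). (Geometrically: for every n ≥ 3 and every admissible l there exists an equifacial n-gonal Siamese dipyramid, with equal heights x = x̃, all of whose 4n faces are congruent to the isosceles triangle Δ(l).) -/

import Mathlib

set_option maxHeartbeats 1600000 in
/-- For every `n ≥ 3` and every admissible `l` there exists an equifacial
`n`-gonal Siamese dipyramid: the aperture function has a positive fixed point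
below `x_max`. -/
theorem equifacial_siamese_exists (n : ℕ) (hn : 3 ≤ n) (l : ℝ)
    (hl₁ : 2 * Real.sin (Real.pi / (2 * n)) < l)
    (hl₂ : l < 2 * Real.sin (Real.pi / n)) :
    ∃ x : ℝ, 0 < x ∧
      x < Real.sqrt (1 - l ^ 2 / (4 * Real.sin (Real.pi / n) ^ 2)) ∧
      x = Real.sqrt (1 - x ^ 2) *
        Real.sin (n * Real.arcsin (l / (2 * Real.sqrt (1 - x ^ 2)))) := by
  have hn3 : (3:ℝ) ≤ (n:ℝ) := by exact_mod_cast hn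
  have hnpos : (0:ℝ) < (n:ℝ) := by linarith
  have hpi := Real.pi_pos
  set s := Real.sin (Real.pi / n) with hs_def
  have hpin_pos : 0 < Real.pi / n := by positivity
  have hpin_le : Real.pi / n ≤ Real.pi / 2 := by
    apply div_le_div_of_nonneg_left hpi.le (by norm_num) (by linarith)
  have hs : 0 < s := Real.sin_pos_of_pos_of_lt_pi hpin_pos
    (by linarith [hpin_le, hpi])
  have hp2n_pos : 0 < Real.pi / (2 * n) := by positivity
  have hp2n_le : Real.pi / (2 * n) ≤ Real.pi / 2 := by
    apply div_le_div_of_nonneg_left hpi.le (by norm_num) (by linarith)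
  have hs2 : 0 < Real.sin (Real.pi / (2 * n)) :=
    Real.sin_pos_of_pos_of_lt_pi hp2n_pos (by linarith)
  have hl0 : 0 < l := by linarith
  have hs1 : s ≤ 1 := Real.sin_le_one _
  have hl2 : l / 2 < 1 := by nlinarith
  -- define m and x_max
  set m := l ^ 2 / (4 * s ^ 2) with hm_def
  have hm0 : 0 < m := by positivity
  have hm1 : m < 1 := by
    rw [hm_def, div_lt_one (by positivity)]
    nlinarith
  set X := Real.sqrt (1 - m) with hX_def
  have hXsq : X ^ 2 = 1 - m := Real.sq_sqrt (by linarith)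
  have hXpos : 0 < X := Real.sqrt_pos.mpr (by linarith)
  -- the function
  set g : ℝ → ℝ := fun x => Real.sqrt (1 - x ^ 2) *
      Real.sin (n * Real.arcsin (l / (2 * Real.sqrt (1 - x ^ 2)))) - x with hg_def
  -- positivity of the inner expression on the interval
  have hsub : ∀ x ∈ Set.Icc (0:ℝ) X, 0 < 1 - x ^ 2 := by
    intro x hx
    have h1 : x ^ 2 ≤ X ^ 2 := by nlinarith [hx.1, hx.2]
    nlinarith
  -- continuity
  have hc : ContinuousOn g (Set.Icc 0 X) := by
    have h1 : ContinuousOn (fun x : ℝ => Real.sqrt (1 - x ^ 2)) (Set.Icc 0 X) :=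
      (Real.continuous_sqrt.comp (continuous_const.sub (continuous_pow 2))).continuousOn
    have hne : ∀ x ∈ Set.Icc (0:ℝ) X, 2 * Real.sqrt (1 - x ^ 2) ≠ 0 := by
      intro x hx
      have := hsub x hx
      have : 0 < Real.sqrt (1 - x ^ 2) := Real.sqrt_pos.mpr this
      positivity
    apply ContinuousOn.sub _ continuousOn_id
    apply ContinuousOn.mul h1
    apply Real.continuous_sin.comp_continuousOn
    apply ContinuousOn.mul continuousOn_const
    apply Real.continuous_arcsin.comp_continuousOn
    exact ContinuousOn.div continuousOn_const
      (continuousOn_const.mul h1) hne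
  -- value at 0
  have hsqrt1 : Real.sqrt (1 - (0:ℝ) ^ 2) = 1 := by norm_num
  have ha1 : Real.pi / (2 * n) < Real.arcsin (l / 2) := by
    have := Real.arcsin_sin (by linarith : -(Real.pi/2) ≤ Real.pi / (2 * n)) hp2n_le
    rw [← this]
    exact Real.strictMonoOn_arcsin ⟨Real.neg_one_le_sin _, Real.sin_le_one _⟩
      ⟨by linarith, by linarith⟩ (by linarith)
  have ha2 : Real.arcsin (l / 2) < Real.pi / n := by
    have := Real.arcsin_sin (by linarith : -(Real.pi/2) ≤ Real.pi / n) hpin_le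
    rw [← this]
    exact Real.strictMonoOn_arcsin ⟨by linarith, by linarith⟩
      ⟨by linarith [Real.neg_one_le_sin (Real.pi / n)], hs1⟩ (by linarith)
  have hg0 : 0 < g 0 := by
    have e0 : g 0 = Real.sin (n * Real.arcsin (l / 2)) := by
      simp only [hg_def]
      norm_num
    rw [e0]
    have h1 : (0:ℝ) < n * Real.arcsin (l / 2) :=
      mul_pos hnpos (lt_trans hp2n_pos ha1)
    have h2 : (n:ℝ) * Real.arcsin (l / 2) < Real.pi := by
      have hB := mul_lt_mul_of_pos_left ha2 hnpos
      have hE : (n:ℝ) * (Real.pi / n) = Real.pi := by field_simp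
      linarith
    exact Real.sin_pos_of_pos_of_lt_pi h1 h2
  -- value at X
  have hgX : g X = -X := by
    have h1 : 1 - X ^ 2 = m := by linarith
    have h2 : Real.sqrt m = l / (2 * s) := by
      have : m = (l / (2 * s)) ^ 2 := by rw [hm_def]; ring
      rw [this, Real.sqrt_sq (by positivity)]
    have h3 : l / (2 * (l / (2 * s))) = s := by
      field_simp
    have h4 : Real.arcsin s = Real.pi / n :=
      Real.arcsin_sin (by linarith) hpin_le
    simp only [hg_def, h1, h2, h3, h4]
    have : (n:ℝ) * (Real.pi / n) = Real.pi := by field_simp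
    rw [this, Real.sin_pi, mul_zero, zero_sub]
  have hgXneg : g X < 0 := by rw [hgX]; linarith
  -- intermediate value theorem
  have hmem : (0:ℝ) ∈ Set.Ioo (g X) (g 0) := ⟨hgXneg, hg0⟩
  obtain ⟨x, hx, hgx⟩ := intermediate_value_Ioo' hXpos.le hc hmem
  refine ⟨x, hx.1, hx.2, ?_⟩
  have : g x = 0 := hgx
  simp only [hg_def] at this
  linarith
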